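/- Let L be an e-cyclic residuated lattice satisfying the left prelinearity law. If the collection of all convex subalgebras of L is totally ordered by set-inclusion, then the lattice order ≤ of L is a total order. -/
import Mathlib


universe u

/-- A residuated lattice: a lattice-ordered monoid with left and right residuals.
`ldiv x z` is `x \ z` and `rdiv z y` is `z / y`. -/
class ResiduatedLattice (α : Type u) extends Lattice α, Monoid α where
  ldiv : α → α → α
  rdiv : α → α → α
  mul_le_iff_le_ldiv : ∀ x y z : α, x * y ≤ z ↔ y ≤ ldiv x z
  mul_le_iff_le_rdiv : ∀ x y z : α, x * y ≤ z ↔ x ≤ rdiv z y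

namespace ResiduatedLattice

variable {α : Type u} [ResiduatedLattice α]

/-- `L` is e-cyclic if `x \ e = e / x` for all `x`. -/
def ECyclic (α : Type u) [ResiduatedLattice α] : Prop :=
  ∀ x : α, ldiv x 1 = rdiv 1 x

/-- Absolute value: `|x| = x ⊓ (e / x) ⊓ e`. -/
def absv (x : α) : α := x ⊓ rdiv 1 x ⊓ 1

/-- A convex subalgebra: contains `e`, closed under all the operations, and order-convex. -/
structure IsConvexSubalgebra (H : Set α) : Prop where
  one_mem : (1 : α) ∈ H
  mul_mem : ∀ ⦃x⦄, x ∈ H → ∀ ⦃y⦄, y ∈ H → x * y ∈ H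
  sup_mem : ∀ ⦃x⦄, x ∈ H → ∀ ⦃y⦄, y ∈ H → x ⊔ y ∈ H
  inf_mem : ∀ ⦃x⦄, x ∈ H → ∀ ⦃y⦄, y ∈ H → x ⊓ y ∈ H
  ldiv_mem : ∀ ⦃x⦄, x ∈ H → ∀ ⦃y⦄, y ∈ H → ldiv x y ∈ H
  rdiv_mem : ∀ ⦃x⦄, x ∈ H → ∀ ⦃y⦄, y ∈ H → rdiv x y ∈ H
  convex : ∀ ⦃a⦄, a ∈ H → ∀ ⦃b⦄, b ∈ H → ∀ ⦃x⦄, a ≤ x → x ≤ b → x ∈ H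

/-- `C[S]`: the smallest convex subalgebra containing `S`. -/
def convexClosure (S : Set α) : Set α :=
  ⋂₀ {H : Set α | IsConvexSubalgebra H ∧ S ⊆ H}

end ResiduatedLattice

open ResiduatedLattice

section Aux

namespace ResiduatedLattice

variable {α : Type u} [ResiduatedLattice α]

lemma le_ldiv' {x y z : α} (h : x * y ≤ z) : y ≤ ldiv x z :=
  (mul_le_iff_le_ldiv x y z).1 h

lemma mul_le_of_le_ldiv' {x y z : α} (h : y ≤ ldiv x z) : x * y ≤ z :=
  (mul_le_iff_le_ldiv x y z).2 h

lemma le_rdiv' {x y z : α} (h : x * y ≤ z) : x ≤ rdiv z y :=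
  (mul_le_iff_le_rdiv x y z).1 h

lemma mul_le_of_le_rdiv' {x y z : α} (h : x ≤ rdiv z y) : x * y ≤ z :=
  (mul_le_iff_le_rdiv x y z).2 h

lemma mul_ldiv_le' (x z : α) : x * ldiv x z ≤ z := mul_le_of_le_ldiv' le_rfl

lemma rdiv_mul_le' (z y : α) : rdiv z y * y ≤ z := mul_le_of_le_rdiv' le_rfl

lemma rl_mul_le_mul {a b c d : α} (h1 : a ≤ b) (h2 : c ≤ d) : a * c ≤ b * d := by
  have h3 : a * c ≤ a * d := mul_le_of_le_ldiv' (h2.trans (le_ldiv' le_rfl))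
  have h4 : a * d ≤ b * d := mul_le_of_le_rdiv' (h1.trans (le_rdiv' le_rfl))
  exact h3.trans h4

lemma rl_pow_le_one {v : α} (hv : v ≤ 1) : ∀ n : ℕ, v ^ n ≤ 1
  | 0 => by simp
  | n + 1 => by
    rw [pow_succ]
    calc v ^ n * v ≤ 1 * 1 := rl_mul_le_mul (rl_pow_le_one hv n) hv
    _ = 1 := mul_one 1

lemma rl_pow_add_le {v : α} (hv : v ≤ 1) (n m : ℕ) : v ^ (n + m) ≤ v ^ n := by
  rw [pow_add]
  calc v ^ n * v ^ m ≤ v ^ n * 1 := rl_mul_le_mul le_rfl (rl_pow_le_one hv m)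
  _ = v ^ n := mul_one _

lemma rl_pow_add_le' {v : α} (hv : v ≤ 1) (n m : ℕ) : v ^ (n + m) ≤ v ^ m := by
  rw [Nat.add_comm]; exact rl_pow_add_le hv m n

lemma rdiv_one_mul_le (z : α) : rdiv 1 z * z ≤ 1 := rdiv_mul_le' 1 z

lemma mul_rdiv_one_le (hec : ECyclic α) (z : α) : z * rdiv 1 z ≤ 1 := by
  rw [← hec z]; exact mul_ldiv_le' z 1

lemma absv_le_self (z : α) : absv z ≤ z := inf_le_left.trans inf_le_left

lemma absv_le_rdiv (z : α) : absv z ≤ rdiv 1 z := inf_le_left.trans inf_le_right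

lemma absv_le_one (z : α) : absv z ≤ 1 := inf_le_right

lemma le_absv {c z : α} (h1 : c ≤ z) (h2 : c ≤ rdiv 1 z) (h3 : c ≤ 1) : c ≤ absv z :=
  le_inf (le_inf h1 h2) h3

lemma absv_of_le_one {v : α} (hv : v ≤ 1) : absv v = v := by
  refine le_antisymm (absv_le_self v) (le_absv le_rfl ?_ hv)
  exact le_rdiv' (by calc v * v ≤ 1 * 1 := rl_mul_le_mul hv hv
    _ = 1 := mul_one 1)

/-- The set `{z | ∃ n, vⁿ ≤ |z|}` is a convex subalgebra, for negative `v`. -/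
lemma isCS (hec : ECyclic α) {v : α} (hv : v ≤ 1) :
    IsConvexSubalgebra {z : α | ∃ n : ℕ, v ^ n ≤ absv z} := by
  have habs : ∀ {n : ℕ} {z : α}, v ^ n ≤ absv z → v ^ n ≤ z := fun h => h.trans (absv_le_self _)
  have hneg : ∀ {n : ℕ} {z : α}, v ^ n ≤ absv z → v ^ n ≤ rdiv 1 z :=
    fun h => h.trans (absv_le_rdiv _)
  constructor
  · exact ⟨0, by
      refine le_absv (by simp) ?_ (by simp)
      exact le_rdiv' (by simp)⟩
  · rintro z ⟨n, hz⟩ w ⟨m, hw⟩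
    refine ⟨n + m, le_absv ?_ ?_ (rl_pow_le_one hv _)⟩
    · rw [pow_add]; exact rl_mul_le_mul (habs hz) (habs hw)
    · refine le_rdiv' ?_
      have key : (rdiv 1 w * rdiv 1 z) * (z * w) ≤ 1 := by
        have h1 : rdiv 1 z * z ≤ 1 := rdiv_one_mul_le z
        calc (rdiv 1 w * rdiv 1 z) * (z * w) = rdiv 1 w * ((rdiv 1 z * z) * w) := by
              rw [mul_assoc, mul_assoc]
          _ ≤ rdiv 1 w * (1 * w) := rl_mul_le_mul le_rfl (rl_mul_le_mul h1 le_rfl)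
          _ = rdiv 1 w * w := by rw [one_mul]
          _ ≤ 1 := rdiv_one_mul_le w
      calc v ^ (n + m) * (z * w) = (v ^ m * v ^ n) * (z * w) := by
            rw [Nat.add_comm, pow_add]
        _ ≤ (rdiv 1 w * rdiv 1 z) * (z * w) :=
            rl_mul_le_mul (rl_mul_le_mul (hneg hw) (hneg hz)) le_rfl
        _ ≤ 1 := key
  · rintro z ⟨n, hz⟩ w ⟨m, hw⟩
    refine ⟨n + m, le_absv ?_ ?_ (rl_pow_le_one hv _)⟩
    · exact (rl_pow_add_le hv n m).trans ((habs hz).trans le_sup_left)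
    · refine le_rdiv' (mul_le_of_le_ldiv' (sup_le ?_ ?_))
      · exact le_ldiv' (le_trans (rl_mul_le_mul ((rl_pow_add_le hv n m).trans (hneg hz))
          le_rfl) (rdiv_one_mul_le z))
      · exact le_ldiv' (le_trans (rl_mul_le_mul ((rl_pow_add_le' hv n m).trans (hneg hw))
          le_rfl) (rdiv_one_mul_le w))
  · rintro z ⟨n, hz⟩ w ⟨m, hw⟩
    refine ⟨n + m, le_absv (le_inf ?_ ?_) ?_ (rl_pow_le_one hv _)⟩
    · exact (rl_pow_add_le hv n m).trans (habs hz)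
    · exact (rl_pow_add_le' hv n m).trans (habs hw)
    · refine le_rdiv' ?_
      calc v ^ (n + m) * (z ⊓ w) ≤ rdiv 1 z * z :=
            rl_mul_le_mul ((rl_pow_add_le hv n m).trans (hneg hz)) inf_le_left
        _ ≤ 1 := rdiv_one_mul_le z
  · rintro z ⟨n, hz⟩ w ⟨m, hw⟩
    refine ⟨n + m, le_absv ?_ ?_ (rl_pow_le_one hv _)⟩
    · refine le_trans ?_ (le_ldiv' (x := z) (y := rdiv 1 z * w) ?_ )
      · rw [pow_add]; exact rl_mul_le_mul (hneg hz) (habs hw)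
      · calc z * (rdiv 1 z * w) = (z * rdiv 1 z) * w := (mul_assoc ..).symm
          _ ≤ 1 * w := rl_mul_le_mul (mul_rdiv_one_le hec z) le_rfl
          _ = w := one_mul w
    · refine le_rdiv' ?_
      have : v ^ (n + m) ≤ rdiv 1 w * z := by
        rw [Nat.add_comm, pow_add]; exact rl_mul_le_mul (hneg hw) (habs hz)
      calc v ^ (n + m) * ldiv z w ≤ (rdiv 1 w * z) * ldiv z w := rl_mul_le_mul this le_rfl
        _ = rdiv 1 w * (z * ldiv z w) := mul_assoc ..
        _ ≤ rdiv 1 w * w := rl_mul_le_mul le_rfl (mul_ldiv_le' z w)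
        _ ≤ 1 := rdiv_one_mul_le w
  · rintro z ⟨n, hz⟩ w ⟨m, hw⟩
    refine ⟨n + m, le_absv ?_ ?_ (rl_pow_le_one hv _)⟩
    · refine le_trans ?_ (le_rdiv' (x := z * rdiv 1 w) ?_)
      · rw [pow_add]; exact rl_mul_le_mul (habs hz) (hneg hw)
      · calc (z * rdiv 1 w) * w = z * (rdiv 1 w * w) := mul_assoc ..
          _ ≤ z * 1 := rl_mul_le_mul le_rfl (rdiv_one_mul_le w)
          _ = z := mul_one z
    · refine le_rdiv' ?_
      have h1 : rdiv 1 z * rdiv z w ≤ rdiv 1 w := by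
        refine le_rdiv' ?_
        calc (rdiv 1 z * rdiv z w) * w = rdiv 1 z * (rdiv z w * w) := mul_assoc ..
          _ ≤ rdiv 1 z * z := rl_mul_le_mul le_rfl (rdiv_mul_le' z w)
          _ ≤ 1 := rdiv_one_mul_le z
      have : v ^ (n + m) ≤ w * rdiv 1 z := by
        rw [Nat.add_comm, pow_add]; exact rl_mul_le_mul (habs hw) (hneg hz)
      calc v ^ (n + m) * rdiv z w ≤ (w * rdiv 1 z) * rdiv z w := rl_mul_le_mul this le_rfl
        _ = w * (rdiv 1 z * rdiv z w) := mul_assoc ..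
        _ ≤ w * rdiv 1 w := rl_mul_le_mul le_rfl h1
        _ ≤ 1 := mul_rdiv_one_le hec w
  · rintro a ⟨n, ha⟩ b ⟨m, hb⟩ x hax hxb
    refine ⟨n + m, le_absv ?_ ?_ (rl_pow_le_one hv _)⟩
    · exact ((rl_pow_add_le hv n m).trans (habs ha)).trans hax
    · refine le_trans ((rl_pow_add_le' hv n m).trans (hneg hb)) (le_rdiv' ?_)
      calc rdiv 1 b * x ≤ rdiv 1 b * b := rl_mul_le_mul le_rfl hxb
        _ ≤ 1 := rdiv_one_mul_le b

lemma sup_pow_eq_one {u v : α} (hu : u ≤ 1) (hv : v ≤ 1) (h : u ⊔ v = 1) :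
    ∀ n : ℕ, u ⊔ v ^ n = 1
  | 0 => by simp [sup_eq_right.2 hu]
  | n + 1 => by
    have ih := sup_pow_eq_one hu hv h n
    refine le_antisymm (sup_le hu (rl_pow_le_one hv _)) ?_
    have huu : u * u ≤ u := le_trans (rl_mul_le_mul le_rfl hu) (mul_one u).le
    have huv : u * v ^ n ≤ u :=
      le_trans (rl_mul_le_mul le_rfl (rl_pow_le_one hv n)) (mul_one u).le
    have hvu : v * u ≤ u := le_trans (rl_mul_le_mul hv le_rfl) (one_mul u).le
    have hvv : v * v ^ n ≤ v ^ (n + 1) := (pow_succ' v n).ge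
    have key : (u ⊔ v) * (u ⊔ v ^ n) ≤ u ⊔ v ^ (n + 1) := by
      refine mul_le_of_le_rdiv' (sup_le (le_rdiv' (mul_le_of_le_ldiv' (sup_le ?_ ?_)))
        (le_rdiv' (mul_le_of_le_ldiv' (sup_le ?_ ?_))))
      · exact le_ldiv' (huu.trans le_sup_left)
      · exact le_ldiv' (huv.trans le_sup_left)
      · exact le_ldiv' (hvu.trans le_sup_left)
      · exact le_ldiv' (hvv.trans le_sup_right)
    calc (1 : α) = (u ⊔ v) * (u ⊔ v ^ n) := by rw [h, ih, mul_one]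
      _ ≤ u ⊔ v ^ (n + 1) := key

end ResiduatedLattice

end Aux


/-- if the convex subalgebras of an e-cyclic residuated lattice with
left prelinearity form a chain, then the lattice order is total. -/
theorem stmt9 {α : Type u} [ResiduatedLattice α] (hec : ECyclic α)
    (hpre : ∀ x y : α, (ldiv x y ⊓ 1) ⊔ (ldiv y x ⊓ 1) = 1)
    (hchain : IsChain (· ⊆ ·) {H : Set α | IsConvexSubalgebra H}) :
    ∀ a b : α, a ≤ b ∨ b ≤ a := by
  intro a b
  set u : α := ldiv a b ⊓ 1 with hu_def
  set v : α := ldiv b a ⊓ 1 with hv_def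
  have hu1 : u ≤ 1 := inf_le_right
  have hv1 : v ≤ 1 := inf_le_right
  have hsup : u ⊔ v = 1 := hpre a b
  set Hu : Set α := {z : α | ∃ n : ℕ, u ^ n ≤ absv z} with hHu
  set Hv : Set α := {z : α | ∃ n : ℕ, v ^ n ≤ absv z} with hHv
  have hcsu : IsConvexSubalgebra Hu := isCS hec hu1
  have hcsv : IsConvexSubalgebra Hv := isCS hec hv1
  have hmemu : u ∈ Hu := ⟨1, by rw [pow_one, absv_of_le_one hu1]⟩
  have hmemv : v ∈ Hv := ⟨1, by rw [pow_one, absv_of_le_one hv1]⟩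
  -- key step: if vⁿ ≤ u for some n, then u = 1 (using u ⊔ vⁿ = 1)
  have key : ∀ u' v' : α, u' ≤ 1 → v' ≤ 1 → u' ⊔ v' = 1 →
      (∃ n : ℕ, v' ^ n ≤ u') → u' = 1 := by
    rintro u' v' hu' hv' hs ⟨n, hn⟩
    have h1 : u' ⊔ v' ^ n = 1 := sup_pow_eq_one hu' hv' hs n
    have : (1 : α) ≤ u' := by
      rw [← h1]
      exact sup_le le_rfl hn
    exact le_antisymm hu' this
  rcases eq_or_ne Hu Hv with heq | hne
  · -- then u ∈ Hv, so ∃ n, vⁿ ≤ |u| = u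
    have : u ∈ Hv := heq ▸ hmemu
    obtain ⟨n, hn⟩ := this
    rw [absv_of_le_one hu1] at hn
    have := key u v hu1 hv1 hsup ⟨n, hn⟩
    left
    have : (1 : α) ≤ ldiv a b := le_of_eq this.symm |>.trans inf_le_left
    calc a = a * 1 := (mul_one a).symm
      _ ≤ b := mul_le_of_le_ldiv' this
  · rcases hchain hcsu hcsv hne with hsub | hsub
    · -- Hu ⊆ Hv : u ∈ Hv
      obtain ⟨n, hn⟩ := hsub hmemu
      rw [absv_of_le_one hu1] at hn
      have h := key u v hu1 hv1 hsup ⟨n, hn⟩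
      left
      have : (1 : α) ≤ ldiv a b := le_of_eq h.symm |>.trans inf_le_left
      calc a = a * 1 := (mul_one a).symm
        _ ≤ b := mul_le_of_le_ldiv' this
    · -- Hv ⊆ Hu : v ∈ Hu
      obtain ⟨n, hn⟩ := hsub hmemv
      rw [absv_of_le_one hv1] at hn
      have h := key v u hv1 hu1 (sup_comm u v ▸ hsup) ⟨n, hn⟩
      right
      have : (1 : α) ≤ ldiv b a := le_of_eq h.symm |>.trans inf_le_left
      calc b = b * 1 := (mul_one b).symm
        _ ≤ a := mul_le_of_le_ldiv' this
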